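/- For λ ∈ R, let X^λ(t,s) = ( √(1+λ²)(t - coth t) + λs, √(1+λ²) sinh(s)/sinh(t), √(1+λ²) cosh(s)/sinh(t) ) for t > 0, s ∈ R. The pullback by X^λ of the Minkowski metric has coefficients E = (1+λ²)coth²t, F = λ√(1+λ²)coth²t, G = λ²coth²t + 1/sinh²t, and EG - F² = (1+λ²) coth²(t)/sinh²(t) > 0; hence X^λ is a spacelike immersion. -/

import Mathlib

noncomputable section
open Real Set

/-- The Minkowski bilinear form on `ℝ^{2,1}`. -/
def mink (u v : ℝ × ℝ × ℝ) : ℝ := u.1 * v.1 + u.2.1 * v.2.1 - u.2.2 * v.2.2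

/-- The glide-invariant surface parametrization `X^λ`. -/
def Xlam (l : ℝ) (t s : ℝ) : ℝ × ℝ × ℝ :=
  (Real.sqrt (1 + l ^ 2) * (t - Real.cosh t / Real.sinh t) + l * s,
   Real.sqrt (1 + l ^ 2) * Real.sinh s / Real.sinh t,
   Real.sqrt (1 + l ^ 2) * Real.cosh s / Real.sinh t)

/-- The coefficients of the first fundamental form of `X^λ` are
`E = (1+λ²)coth²t`, `F = λ√(1+λ²)coth²t`, `G = λ²coth²t + 1/sinh²t`, with
`EG - F² = (1+λ²)coth²t/sinh²t > 0`; hence `X^λ` is a spacelike immersion. -/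
theorem stmt13 (l t s : ℝ) (ht : 0 < t) :
    let Xt := deriv (fun t' => Xlam l t' s) t
    let Xs := deriv (fun s' => Xlam l t s') s
    mink Xt Xt = (1 + l ^ 2) * (Real.cosh t / Real.sinh t) ^ 2 ∧
    mink Xt Xs = l * Real.sqrt (1 + l ^ 2) * (Real.cosh t / Real.sinh t) ^ 2 ∧
    mink Xs Xs = l ^ 2 * (Real.cosh t / Real.sinh t) ^ 2 + 1 / (Real.sinh t) ^ 2 ∧
    mink Xt Xt * mink Xs Xs - (mink Xt Xs) ^ 2 =
      (1 + l ^ 2) * (Real.cosh t / Real.sinh t) ^ 2 / (Real.sinh t) ^ 2 ∧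
    0 < mink Xt Xt ∧
    0 < mink Xt Xt * mink Xs Xs - (mink Xt Xs) ^ 2 := by
  intro Xt Xs
  set a := Real.sqrt (1 + l ^ 2) with ha
  have ha2 : a ^ 2 = 1 + l ^ 2 := Real.sq_sqrt (by positivity)
  have hsp : 0 < Real.sinh t := Real.sinh_pos_iff.mpr ht
  have hs0 : Real.sinh t ≠ 0 := ne_of_gt hsp
  -- derivative in t
  have h1 : HasDerivAt (fun t' => a * (t' - Real.cosh t' / Real.sinh t') + l * s)
      (a * (1 - (Real.sinh t * Real.sinh t - Real.cosh t * Real.cosh t) /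
        Real.sinh t ^ 2)) t := by
    have := ((hasDerivAt_id t).sub
      ((Real.hasDerivAt_cosh t).div (Real.hasDerivAt_sinh t) hs0)).const_mul a
    simpa using this.add_const (l * s)
  have h2 : HasDerivAt (fun t' => a * Real.sinh s / Real.sinh t')
      ((0 * Real.sinh t - a * Real.sinh s * Real.cosh t) / Real.sinh t ^ 2) t :=
    (hasDerivAt_const t (a * Real.sinh s)).div (Real.hasDerivAt_sinh t) hs0
  have h3 : HasDerivAt (fun t' => a * Real.cosh s / Real.sinh t')
      ((0 * Real.sinh t - a * Real.cosh s * Real.cosh t) / Real.sinh t ^ 2) t :=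
    (hasDerivAt_const t (a * Real.cosh s)).div (Real.hasDerivAt_sinh t) hs0
  have hXt : Xt = (a * (1 - (Real.sinh t * Real.sinh t - Real.cosh t * Real.cosh t) /
        Real.sinh t ^ 2),
      (0 * Real.sinh t - a * Real.sinh s * Real.cosh t) / Real.sinh t ^ 2,
      (0 * Real.sinh t - a * Real.cosh s * Real.cosh t) / Real.sinh t ^ 2) := by
    have : HasDerivAt (fun t' => Xlam l t' s) _ t := h1.prodMk (h2.prodMk h3)
    exact this.deriv
  -- derivative in s
  have k1 : HasDerivAt (fun s' => a * (t - Real.cosh t / Real.sinh t) + l * s') l s := by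
    simpa using ((hasDerivAt_id s).const_mul l).const_add (a * (t - Real.cosh t / Real.sinh t))
  have k2 : HasDerivAt (fun s' => a * Real.sinh s' / Real.sinh t)
      (a * Real.cosh s / Real.sinh t) s := by
    simpa [mul_div_assoc] using ((Real.hasDerivAt_sinh s).const_mul a).div_const (Real.sinh t)
  have k3 : HasDerivAt (fun s' => a * Real.cosh s' / Real.sinh t)
      (a * Real.sinh s / Real.sinh t) s := by
    simpa [mul_div_assoc] using ((Real.hasDerivAt_cosh s).const_mul a).div_const (Real.sinh t)
  have hXs : Xs = (l, a * Real.cosh s / Real.sinh t, a * Real.sinh s / Real.sinh t) := by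
    have : HasDerivAt (fun s' => Xlam l t s') _ s := k1.prodMk (k2.prodMk k3)
    exact this.deriv
  have hct : Real.cosh t ^ 2 = Real.sinh t ^ 2 + 1 := Real.cosh_sq t
  have hcs : Real.cosh s ^ 2 = Real.sinh s ^ 2 + 1 := Real.cosh_sq s
  have hE : mink Xt Xt = (1 + l ^ 2) * (Real.cosh t / Real.sinh t) ^ 2 := by
    rw [hXt]; unfold mink; field_simp
    linear_combination (Real.cosh t ^ 2 * a ^ 2) * hct +
      (Real.sinh t ^ 2 * Real.cosh t ^ 2) * ha2 -
      (Real.cosh t ^ 2 * a ^ 2) * hcs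
  have hF : mink Xt Xs = l * a * (Real.cosh t / Real.sinh t) ^ 2 := by
    rw [hXt, hXs]; unfold mink; field_simp; ring
  have hG : mink Xs Xs = l ^ 2 * (Real.cosh t / Real.sinh t) ^ 2 + 1 / Real.sinh t ^ 2 := by
    rw [hXs]; unfold mink; field_simp
    linear_combination (-(l ^ 2)) * hct +
      (a ^ 2) * hcs + ha2
  have hD : mink Xt Xt * mink Xs Xs - (mink Xt Xs) ^ 2 =
      (1 + l ^ 2) * (Real.cosh t / Real.sinh t) ^ 2 / Real.sinh t ^ 2 := by
    rw [hE, hF, hG]; field_simp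
    linear_combination (-(l ^ 2 * Real.cosh t ^ 2)) * ha2
  have hcp : 0 < Real.cosh t := Real.cosh_pos t
  refine ⟨hE, hF, hG, hD, ?_, ?_⟩
  · rw [hE]; positivity
  · rw [hD]; positivity
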